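/- For all integers λ1, λ2, β1, β2 with λ1 ≥ 0, λ2 ≥ 0, β1 − β2 ≥ 0, 2λ2 + β1 − 2β2 ≥ 0, −β1 + 2β2 ≥ 0, −λ2 + β2 ≥ 0 and λ1 − β1 ≥ 0, one has N(λ1, λ2, β1, β2) = (1/2)λ2 + (1/2)β1 + β1β2 − β2² − (1/4)β1² + λ2β2 − (1/2)λ2² + (1/8)(−1)^{β1} + 7/8. -/

import Mathlib

open Finset

/-- Splitting a sum over an integer interval `Ioc a c` at an intermediate point `b`. -/
private lemma sum_Ioc_split (f : ℤ → ℤ) {a b c : ℤ} (hab : a ≤ b) (hbc : b ≤ c) :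
    ∑ y ∈ Finset.Ioc a c, f y
      = (∑ y ∈ Finset.Ioc a b, f y) + ∑ y ∈ Finset.Ioc b c, f y := by
  rw [← Finset.Ioc_union_Ioc_eq_Ioc hab hbc, Finset.sum_union]
  exact Finset.disjoint_left.2 fun x hx hx' => by
    simp only [Finset.mem_Ioc] at hx hx'; omega

/-- Gauss-type summation of a linear function over an integer interval. -/
private lemma sum_linear (u v : ℤ) {a b : ℤ} (h : a ≤ b) :
    2 * ∑ y ∈ Finset.Ioc a b, (u + v * y) = 2*(b-a)*u + v*(b*b+b-a*a-a) := by
  revert h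
  refine Int.le_induction
    (motive := fun b _ => 2 * ∑ y ∈ Finset.Ioc a b, (u + v * y)
      = 2*(b-a)*u + v*(b*b+b-a*a-a)) ?_ ?_ b
  · simp [Finset.Ioc_self]
  · intro n hn ih
    have hins : Finset.Ioc a (n+1) = insert (n+1) (Finset.Ioc a n) := by
      ext x; simp only [Finset.mem_Ioc, Finset.mem_insert]; omega
    rw [hins, Finset.sum_insert (by simp only [Finset.mem_Ioc]; omega)]
    ring_nf
    ring_nf at ih
    linarith [ih]

/-- Core computation: the value of the lattice-point-count sum, multiplied by 8. -/
private lemma core_sum (l2 b1 b2 c r : ℤ) (hl2 : 0 ≤ l2) (h2 : b2 ≤ b1)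
    (h3 : 2*b2 ≤ 2*l2 + b1) (h4 : b1 ≤ 2*b2) (h5 : l2 ≤ b2)
    (hb1 : b1 = 2*c + r) (hr : r = 0 ∨ r = 1) :
    8 * ∑ y ∈ Finset.Icc (0:ℤ) l2,
        max (min b1 (2*b2-2*y) + 1 - max (2*y) (b2-l2+y)) 0
      = 4*l2 + 4*b1 + 8*b1*b2 - 8*b2^2 - 2*b1^2 + 8*l2*b2 - 4*l2^2 + 8 - 2*r := by
  have hIcc : Finset.Icc (0:ℤ) l2 = Finset.Ioc (-1) l2 := by
    ext x; simp only [Finset.mem_Icc, Finset.mem_Ioc]; omega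
  obtain ⟨t, ht⟩ : ∃ t : ℤ, t = b2 - c - r := ⟨_, rfl⟩
  have hq : 2*b2 - b1 = 2*t + r := by omega
  rcases le_or_gt b2 (2*l2) with hc1 | hc2
  · -- Case b2 ≤ 2*l2
    obtain ⟨Y, s, hY, hs⟩ : ∃ Y s : ℤ, b2 = 2*Y + s ∧ (s = 0 ∨ s = 1) :=
      ⟨b2/2, b2 % 2, by omega, by omega⟩
    have hY0 : (-1:ℤ) ≤ Y := by omega
    have hYl2 : Y ≤ l2 := by omega
    have htY : t ≤ Y := by omega
    have ht0 : (-1:ℤ) ≤ t := by omega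
    have hd0 : (0:ℤ) ≤ b2 - l2 := by omega
    have hdY : b2 - l2 ≤ Y := by omega
    rw [hIcc, sum_Ioc_split _ hY0 hYl2]
    have hz : ∑ y ∈ Finset.Ioc Y l2,
        max (min b1 (2*b2-2*y) + 1 - max (2*y) (b2-l2+y)) 0 = 0 :=
      Finset.sum_eq_zero fun y hy => by
        simp only [Finset.mem_Ioc] at hy; omega
    have hmain : ∑ y ∈ Finset.Ioc (-1:ℤ) Y,
        max (min b1 (2*b2-2*y) + 1 - max (2*y) (b2-l2+y)) 0
        = (∑ y ∈ Finset.Ioc (-1:ℤ) Y, ((b1+1-(b2-l2)) + (-1) * y))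
          - (∑ y ∈ Finset.Ioc (-1:ℤ) Y, max ((-(2*b2-b1)) + 2 * y) 0)
          - (∑ y ∈ Finset.Ioc (-1:ℤ) Y, max ((-(b2-l2)) + 1 * y) 0) := by
      rw [← Finset.sum_sub_distrib, ← Finset.sum_sub_distrib]
      refine Finset.sum_congr rfl fun y hy => ?_
      simp only [Finset.mem_Ioc] at hy
      omega
    have hB : ∑ y ∈ Finset.Ioc (-1:ℤ) Y, max ((-(2*b2-b1)) + 2 * y) 0
        = ∑ y ∈ Finset.Ioc t Y, ((-(2*b2-b1)) + 2 * y) := by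
      rw [sum_Ioc_split _ ht0 htY]
      have h01 : ∑ y ∈ Finset.Ioc (-1:ℤ) t, max ((-(2*b2-b1)) + 2 * y) 0 = 0 :=
        Finset.sum_eq_zero fun y hy => by
          simp only [Finset.mem_Ioc] at hy; omega
      have h02 : ∑ y ∈ Finset.Ioc t Y, max ((-(2*b2-b1)) + 2 * y) 0
          = ∑ y ∈ Finset.Ioc t Y, ((-(2*b2-b1)) + 2 * y) :=
        Finset.sum_congr rfl fun y hy => by
          simp only [Finset.mem_Ioc] at hy; omega
      rw [h01, h02]; ring
    have hC : ∑ y ∈ Finset.Ioc (-1:ℤ) Y, max ((-(b2-l2)) + 1 * y) 0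
        = ∑ y ∈ Finset.Ioc (b2-l2) Y, ((-(b2-l2)) + 1 * y) := by
      rw [sum_Ioc_split _ (by omega : (-1:ℤ) ≤ b2 - l2) hdY]
      have h01 : ∑ y ∈ Finset.Ioc (-1:ℤ) (b2-l2), max ((-(b2-l2)) + 1 * y) 0 = 0 :=
        Finset.sum_eq_zero fun y hy => by
          simp only [Finset.mem_Ioc] at hy; omega
      have h02 : ∑ y ∈ Finset.Ioc (b2-l2) Y, max ((-(b2-l2)) + 1 * y) 0
          = ∑ y ∈ Finset.Ioc (b2-l2) Y, ((-(b2-l2)) + 1 * y) :=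
        Finset.sum_congr rfl fun y hy => by
          simp only [Finset.mem_Ioc] at hy; omega
      rw [h01, h02]; ring
    have hA2 := sum_linear (b1+1-(b2-l2)) (-1) hY0
    have hB2 := sum_linear (-(2*b2-b1)) 2 htY
    have hC2 := sum_linear (-(b2-l2)) 1 hdY
    rw [hz, hmain, hB, hC]
    subst hb1
    obtain rfl : b2 = 2*Y + s := hY
    obtain rfl : t = 2*Y + s - c - r := by omega
    rcases hr with rfl | rfl <;> rcases hs with rfl | rfl <;>
      linear_combination 4*hA2 - 4*hB2 - 4*hC2
  · -- Case 2*l2 < b2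
    have ht0 : (-1:ℤ) ≤ t := by omega
    have htl2 : t ≤ l2 := by omega
    rw [hIcc, sum_Ioc_split _ ht0 htl2]
    have hP1 : ∑ y ∈ Finset.Ioc (-1:ℤ) t,
        max (min b1 (2*b2-2*y) + 1 - max (2*y) (b2-l2+y)) 0
        = ∑ y ∈ Finset.Ioc (-1:ℤ) t, ((b1+1-(b2-l2)) + (-1) * y) :=
      Finset.sum_congr rfl fun y hy => by
        simp only [Finset.mem_Ioc] at hy; omega
    have hP2 : ∑ y ∈ Finset.Ioc t l2,
        max (min b1 (2*b2-2*y) + 1 - max (2*y) (b2-l2+y)) 0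
        = ∑ y ∈ Finset.Ioc t l2, ((b2+l2+1) + (-3) * y) :=
      Finset.sum_congr rfl fun y hy => by
        simp only [Finset.mem_Ioc] at hy; omega
    have hA2 := sum_linear (b1+1-(b2-l2)) (-1) ht0
    have hB2 := sum_linear (b2+l2+1) (-3) htl2
    rw [hP1, hP2]
    subst hb1
    obtain rfl : b2 = c + t + r := by omega
    rcases hr with rfl | rfl <;> linear_combination 4*hA2 + 4*hB2

/-- The number of quadruples `(a22, a11, a12, a13)` of nonnegative integers satisfying
Littelmann's inequalities for `so₅(ℂ)` together with the weight equations
`a22 + a12 = β1` and `a11 + a13 = β2`.  By Littelmann's results this is the dimension of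
the weight space of weight `λ1·ω1 + λ2·ω2 − β1·α1 − β2·α2` in the irreducible
`so₅(ℂ)`-module of highest weight `λ1·ω1 + λ2·ω2`. -/
noncomputable def weightMult (l1 l2 b1 b2 : ℤ) : ℕ :=
  Set.ncard {a : ℤ × ℤ × ℤ × ℤ |
    0 ≤ a.1 ∧ 0 ≤ a.2.1 ∧ 0 ≤ a.2.2.1 ∧ 0 ≤ a.2.2.2 ∧
    2 * a.2.1 ≥ a.2.2.1 ∧
    a.2.2.1 ≥ 2 * a.2.2.2 ∧
    a.2.2.2 ≤ l2 ∧
    a.2.2.1 ≤ l1 + 2 * a.2.2.2 ∧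
    a.2.1 ≤ l2 + a.2.2.1 - 2 * a.2.2.2 ∧
    a.1 ≤ l1 + 2 * a.2.1 - 2 * a.2.2.1 + 2 * a.2.2.2 ∧
    a.1 + a.2.2.1 = b1 ∧
    a.2.1 + a.2.2.2 = b2}

theorem weightMult_on_cone_f6 (l1 l2 b1 b2 : ℤ)
    (h0 : 0 ≤ l1)
    (h1 : 0 ≤ l2)
    (h2 : 0 ≤ b1 - b2)
    (h3 : 0 ≤ 2*l2 + b1 - 2*b2)
    (h4 : 0 ≤ -b1 + 2*b2)
    (h5 : 0 ≤ -l2 + b2)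
    (h6 : 0 ≤ l1 - b1) :
    (weightMult l1 l2 b1 b2 : ℚ) = (1/2)*l2 + (1/2)*b1 + b1*b2 - b2^2 - (1/4)*b1^2 + l2*b2 - (1/2)*l2^2 + (1/8)*(-1 : ℚ)^b1 + 7/8 := by
  classical
  set T : Finset (ℤ × ℤ) := (Finset.Icc (0:ℤ) l2 ×ˢ Finset.Icc (0:ℤ) b1).filter
      (fun p => 2*p.1 ≤ p.2 ∧ b2 - l2 + p.1 ≤ p.2 ∧ p.2 ≤ 2*b2 - 2*p.1) with hT
  have hinj : Function.Injective (fun p : ℤ × ℤ => (b1 - p.2, b2 - p.1, p.2, p.1)) := by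
    intro p q h
    simp only [Prod.mk.injEq] at h
    exact Prod.ext h.2.2.2 h.2.2.1
  have hset : {a : ℤ × ℤ × ℤ × ℤ |
      0 ≤ a.1 ∧ 0 ≤ a.2.1 ∧ 0 ≤ a.2.2.1 ∧ 0 ≤ a.2.2.2 ∧
      2 * a.2.1 ≥ a.2.2.1 ∧
      a.2.2.1 ≥ 2 * a.2.2.2 ∧
      a.2.2.2 ≤ l2 ∧
      a.2.2.1 ≤ l1 + 2 * a.2.2.2 ∧
      a.2.1 ≤ l2 + a.2.2.1 - 2 * a.2.2.2 ∧
      a.1 ≤ l1 + 2 * a.2.1 - 2 * a.2.2.1 + 2 * a.2.2.2 ∧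
      a.1 + a.2.2.1 = b1 ∧
      a.2.1 + a.2.2.2 = b2}
      = (fun p : ℤ × ℤ => (b1 - p.2, b2 - p.1, p.2, p.1)) '' ↑T := by
    ext ⟨a22, a11, a12, a13⟩
    simp only [Set.mem_setOf_eq, Set.mem_image, Finset.mem_coe, hT, Finset.mem_filter,
      Finset.mem_product, Finset.mem_Icc, Prod.exists, Prod.mk.injEq]
    constructor
    · rintro ⟨g1, g2, g3, g4, g5, g6, g7, g8, g9, g10, g11, g12⟩
      exact ⟨a13, a12, ⟨⟨⟨by omega, by omega⟩, by omega, by omega⟩, by omega, by omega, by omega⟩,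
        by omega, by omega, rfl, rfl⟩
    · rintro ⟨y, x, ⟨⟨⟨hy0, hyl⟩, hx0, hxb⟩, hxy1, hxy2, hxy3⟩, e1, e2, e3, e4⟩
      subst e3; subst e4
      refine ⟨by omega, by omega, by omega, by omega, by omega, by omega, by omega,
        by omega, by omega, by omega, by omega, by omega⟩
  have hcard : weightMult l1 l2 b1 b2 = T.card := by
    rw [weightMult, hset, Set.ncard_image_of_injective _ hinj, Set.ncard_coe_finset]
  have hTcard : T.card = ∑ y ∈ Finset.Icc (0:ℤ) l2,
      (min b1 (2*b2-2*y) + 1 - max (2*y) (b2-l2+y)).toNat := by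
    rw [hT, Finset.card_filter, Finset.sum_product]
    refine Finset.sum_congr rfl fun y hy => ?_
    simp only [Finset.mem_Icc] at hy
    have hfe : (Finset.Icc (0:ℤ) b1).filter
        (fun x => 2*y ≤ x ∧ b2 - l2 + y ≤ x ∧ x ≤ 2*b2 - 2*y)
        = Finset.Icc (max (2*y) (b2-l2+y)) (min b1 (2*b2-2*y)) := by
      ext x
      simp only [Finset.mem_filter, Finset.mem_Icc]
      omega
    calc ∑ x ∈ Finset.Icc (0:ℤ) b1,
          (if 2*y ≤ x ∧ b2 - l2 + y ≤ x ∧ x ≤ 2*b2 - 2*y then 1 else 0)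
        = ((Finset.Icc (0:ℤ) b1).filter
            (fun x => 2*y ≤ x ∧ b2 - l2 + y ≤ x ∧ x ≤ 2*b2 - 2*y)).card :=
          (Finset.card_filter _ _).symm
      _ = (min b1 (2*b2-2*y) + 1 - max (2*y) (b2-l2+y)).toNat := by
          rw [hfe, Int.card_Icc]
  have hZ : (weightMult l1 l2 b1 b2 : ℤ) = ∑ y ∈ Finset.Icc (0:ℤ) l2,
      max (min b1 (2*b2-2*y) + 1 - max (2*y) (b2-l2+y)) 0 := by
    rw [hcard, hTcard]
    push_cast [Int.toNat_eq_max]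
    rfl
  rcases Int.even_or_odd b1 with hpar | hpar
  · obtain ⟨c, hc⟩ := hpar
    have key := core_sum l2 b1 b2 c 0 (by omega) (by omega) (by omega) (by omega) (by omega)
      (by omega) (Or.inl rfl)
    rw [← hZ] at key
    have key' : ((8 * (weightMult l1 l2 b1 b2 : ℤ) : ℤ) : ℚ)
        = ((4*l2 + 4*b1 + 8*b1*b2 - 8*b2^2 - 2*b1^2 + 8*l2*b2 - 4*l2^2 + 8 - 2*0 : ℤ) : ℚ) := by
      exact_mod_cast congrArg (fun z : ℤ => (z : ℚ)) key
    push_cast at key'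
    rw [Even.neg_one_zpow ⟨c, hc⟩]
    linear_combination key' / 8
  · obtain ⟨c, hc⟩ := hpar
    have key := core_sum l2 b1 b2 c 1 (by omega) (by omega) (by omega) (by omega) (by omega)
      (by omega) (Or.inr rfl)
    rw [← hZ] at key
    have key' : ((8 * (weightMult l1 l2 b1 b2 : ℤ) : ℤ) : ℚ)
        = ((4*l2 + 4*b1 + 8*b1*b2 - 8*b2^2 - 2*b1^2 + 8*l2*b2 - 4*l2^2 + 8 - 2*1 : ℤ) : ℚ) := by
      exact_mod_cast congrArg (fun z : ℤ => (z : ℚ)) key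
    push_cast at key'
    rw [Odd.neg_one_zpow ⟨c, hc⟩]
    linear_combination key' / 8
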